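/- Suppose A is an n × m matrix over a field (or more generally with entries in a domain, working in its fraction field), and the linear system Ax = b has a solution. Then there exists a solution x where each coordinate x_i is either 0 or of the form det(M_i)/det(N), where M_i and N are square submatrices (minors) of the augmented matrix [A | b]. -/

import Mathlib

open Matrix Submodule Set

/-- From any finite family of vectors one can extract an injective subfamily which is
linearly independent and has the same span. -/
lemma extract_indices {K V : Type*} [Field K] [AddCommGroup V] [Module K V]
    {N : ℕ} (v : Fin N → V) :
    ∃ (k : ℕ) (f : Fin k → Fin N), Function.Injective f ∧
      LinearIndependent K (v ∘ f) ∧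
      Submodule.span K (Set.range (v ∘ f)) = Submodule.span K (Set.range v) := by
  obtain ⟨b, hb_sub, hb_span, hb_ind⟩ := exists_linearIndependent K (Set.range v)
  have hbfin : b.Finite := (Set.finite_range v).subset hb_sub
  haveI := hbfin.fintype
  set e := (Fintype.equivFin b).symm with he
  have hch : ∀ x : b, ∃ j, v j = (x : V) := fun x => hb_sub x.2
  choose g hg using hch
  refine ⟨Fintype.card b, fun i => g (e i), ?_, ?_, ?_⟩
  · intro i j hij
    have h1 : ((e i : b) : V) = ((e j : b) : V) := by
      rw [← hg (e i), ← hg (e j)]; exact congrArg v hij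
    exact e.injective (Subtype.ext h1)
  · have : (v ∘ fun i => g (e i)) = (fun x : b => (x : V)) ∘ e := by
      funext i; exact hg (e i)
    rw [this]
    exact hb_ind.comp e e.injective
  · have : Set.range (v ∘ fun i => g (e i)) = b := by
      have : (v ∘ fun i => g (e i)) = (fun x : b => (x : V)) ∘ e := by
        funext i; exact hg (e i)
      rw [this, Set.range_comp, e.surjective.range_eq, Set.image_univ, Subtype.range_coe]
    rw [this, hb_span]



/-- The augmented matrix `[A | b]`. -/
noncomputable def augMat {K : Type*} [Field K] {n m : ℕ}
    (A : Matrix (Fin n) (Fin m) K) (b : Fin n → K) : Matrix (Fin n) (Fin (m + 1)) K :=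
  Matrix.of fun p (q : Fin (m + 1)) => if h : (q : ℕ) < m then A p ⟨q, h⟩ else b p

/-- If the linear system `Ax = b` has a solution, then it has a solution in which each
coordinate is either `0` or a quotient `det M_i / det N` of minors of the augmented
matrix `[A | b]`. -/
theorem cramer_general {K : Type*} [Field K] {n m : ℕ}
    (A : Matrix (Fin n) (Fin m) K) (b : Fin n → K)
    (hsol : ∃ x : Fin m → K, A.mulVec x = b) :
    ∃ x : Fin m → K, A.mulVec x = b ∧
      ∃ (k : ℕ) (rN : Fin k → Fin n) (cN : Fin k → Fin (m + 1)),
        Function.Injective rN ∧ Function.Injective cN ∧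
        ∀ i : Fin m, x i = 0 ∨
          ∃ (rM : Fin k → Fin n) (cM : Fin k → Fin (m + 1)),
            Function.Injective rM ∧ Function.Injective cM ∧
            x i = ((augMat A b).submatrix rM cM).det / ((augMat A b).submatrix rN cN).det := by
  classical
  -- `mulVec` as a linear combination of columns
  have key : ∀ y : Fin m → K, A.mulVec y = ∑ j, y j • Aᵀ j := by
    intro y; funext i
    simp [Matrix.mulVec, dotProduct, Finset.sum_apply, Matrix.transpose_apply, mul_comm]
  -- extract a basis of the column space
  obtain ⟨k, cI, hcI_inj, hcI_ind, hcI_span⟩ := extract_indices (K := K) Aᵀ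
  -- b is in the span of the chosen columns
  have hb_mem : b ∈ Submodule.span K (Set.range (Aᵀ ∘ cI)) := by
    rw [hcI_span]
    obtain ⟨x₀, hx₀⟩ := hsol
    rw [← hx₀, key x₀]
    exact Submodule.sum_mem _ fun j _ =>
      Submodule.smul_mem _ _ (Submodule.subset_span ⟨j, rfl⟩)
  obtain ⟨c, hc⟩ := (mem_span_range_iff_exists_fun K).mp hb_mem
  -- the candidate solution
  set x : Fin m → K := fun j => ∑ l, if cI l = j then c l else 0 with hxdef
  have hx_at : ∀ l, x (cI l) = c l := by
    intro l
    show (∑ l', if cI l' = cI l then c l' else 0) = c l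
    rw [Finset.sum_eq_single l]
    · simp
    · intro l' _ hne; rw [if_neg (fun h => hne (hcI_inj h))]
    · simp
  have hx0 : ∀ j, (∀ l, cI l ≠ j) → x j = 0 := by
    intro j hj
    exact Finset.sum_eq_zero fun l _ => if_neg (hj l)
  have hAx : A.mulVec x = b := by
    rw [key x, ← hc]
    calc ∑ j, x j • Aᵀ j
        = ∑ j, ∑ l, (if cI l = j then c l • Aᵀ j else 0) := by
          refine Finset.sum_congr rfl fun j _ => ?_
          rw [show x j = ∑ l, if cI l = j then c l else 0 from rfl, Finset.sum_smul]
          exact Finset.sum_congr rfl fun l _ => by rw [ite_smul, zero_smul]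
      _ = ∑ l, ∑ j, (if cI l = j then c l • Aᵀ j else 0) := Finset.sum_comm
      _ = ∑ l, c l • (Aᵀ ∘ cI) l := by
          refine Finset.sum_congr rfl fun l _ => ?_
          rw [Finset.sum_ite_eq]
          simp
          rfl
  -- the selected columns as an n×k matrix
  set B : Matrix (Fin n) (Fin k) K := A.submatrix id cI with hBdef
  have hBT : Bᵀ = Aᵀ ∘ cI := by funext l i; rfl
  have hBrank : B.rank = k := by
    rw [Matrix.rank_eq_finrank_span_cols, show B.col = Aᵀ ∘ cI from hBT, finrank_span_eq_card hcI_ind]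
    simp
  -- the rows of B span the whole space
  have hrows_span : Submodule.span K (Set.range fun i : Fin n => B i) = ⊤ := by
    have h1 : Submodule.span K (Set.range fun i : Fin n => B i)
        = LinearMap.range Bᵀ.mulVecLin := by
      rw [Matrix.range_mulVecLin]; rfl
    apply Submodule.eq_top_of_finrank_eq
    rw [h1]
    have h2 : Bᵀ.rank = k := by rw [Matrix.rank_transpose, hBrank]
    rw [show Module.finrank K ↥(LinearMap.range Bᵀ.mulVecLin) = Bᵀ.rank from rfl, h2,
      Module.finrank_fintype_fun_eq_card, Fintype.card_fin]
  -- extract k linearly independent rows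
  obtain ⟨k', rI, hrI_inj, hrI_ind, hrI_span⟩ := extract_indices (K := K) (fun i : Fin n => B i)
  have hk' : k = k' := by
    have h2 := finrank_span_eq_card hrI_ind
    rw [hrI_span, hrows_span, finrank_top, Module.finrank_fintype_fun_eq_card,
      Fintype.card_fin] at h2
    simp at h2; exact h2
  subst hk'
  set Nmat : Matrix (Fin k) (Fin k) K := A.submatrix rI cI with hNmat
  have hNrows : (fun p => Nmat p) = (fun i : Fin n => B i) ∘ rI := by funext p l; rfl
  have hNunit : IsUnit Nmat :=
    Matrix.linearIndependent_rows_iff_isUnit.mp (show LinearIndependent K (fun p => Nmat p) from hNrows ▸ hrI_ind)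
  have hNdet : Nmat.det ≠ 0 := by
    simpa [isUnit_iff_ne_zero] using (Matrix.isUnit_iff_isUnit_det Nmat).mp hNunit
  have hNc : Nmat.mulVec c = b ∘ rI := by
    funext p
    have h3 := congrFun hc (rI p)
    simp only [Finset.sum_apply, Pi.smul_apply, Function.comp_apply,
      Matrix.transpose_apply, smul_eq_mul] at h3
    simp [hNmat, Matrix.mulVec, dotProduct, Matrix.submatrix_apply, mul_comm]; exact h3
  have hcramer : c = Nmat.det⁻¹ • Matrix.cramer Nmat (b ∘ rI) := by
    apply Matrix.mulVec_injective_iff_isUnit.mpr hNunit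
    rw [hNc, Matrix.mulVec_smul, Matrix.mulVec_cramer, smul_smul,
      inv_mul_cancel₀ hNdet, one_smul]
  have hsubN : (augMat A b).submatrix rI (fun l => (cI l).castSucc) = Nmat := by
    ext p q
    simp only [Matrix.submatrix_apply, augMat, Matrix.of_apply, hNmat]
    rw [dif_pos]
    · simp
    · simp only [Fin.coe_castSucc]; exact (cI q).2
  refine ⟨x, hAx, k, rI, fun l => (cI l).castSucc, hrI_inj,
    fun a b h => hcI_inj (Fin.castSucc_injective m h), fun i => ?_⟩
  by_cases hmem : ∃ l, cI l = i
  · obtain ⟨l, rfl⟩ := hmem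
    right
    refine ⟨rI, fun l' => if l' = l then Fin.last m else (cI l').castSucc, hrI_inj, ?_, ?_⟩
    · intro a b h
      dsimp only at h
      split_ifs at h with h1 h2 h2
      · rw [h1, h2]
      · exact absurd h.symm (Fin.castSucc_lt_last (cI b)).ne
      · exact absurd h (Fin.castSucc_lt_last (cI a)).ne
      · exact hcI_inj (Fin.castSucc_injective m h)
    · have hsubM : (augMat A b).submatrix rI
          (fun l' => if l' = l then Fin.last m else (cI l').castSucc)
          = Nmat.updateCol l (b ∘ rI) := by
        ext p q
        by_cases hq : q = l
        · subst hq
          simp [augMat, Matrix.updateCol_apply]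
        · simp only [Matrix.submatrix_apply, augMat, Matrix.of_apply, if_neg hq,
            Matrix.updateCol_apply, hq, if_false, hNmat]
          rw [dif_pos]
          · simp
          · simp only [Fin.coe_castSucc]; exact (cI q).2
      rw [hsubN, hsubM, hx_at l, congrFun hcramer l]
      rw [Pi.smul_apply, Matrix.cramer_apply, smul_eq_mul, div_eq_mul_inv, mul_comm]
  · left
    exact hx0 i (fun l h => hmem ⟨l, h⟩)
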